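/- Converse for the oblivious Gaussian AVMAC at zero rate: If L·P₁ < N and L·P₂ < N, then no rate pair (R₁,R₂) with R₁ > 0 and R₂ > 0 is achievable for L-list decoding over the oblivious Gaussian AVMAC with parameters P₁, P₂, N, σ². More precisely, for every sequence of L-list codes of blocklength n with message-set sizes M_n → ∞ and W_n → ∞, the average probability of error (against the worst admissible jammer, whose state vector satisfies ‖s̲‖₂ ≤ √(nN) with probability one) is bounded away from 0 along the sequence; hence the L-list-decoding capacity region is {(0,0)}. -/

import Mathlib

open Finset MeasureTheory ProbabilityTheory Filter
open scoped ENNReal NNReal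

noncomputable section
set_option linter.unusedSectionVars false
set_option maxHeartbeats 1000000

namespace Stmt3

/-- The law of the ambient i.i.d. `N(0,σ²)` noise vector `g̲ ∈ ℝⁿ`. -/
def gaussNoise (n : ℕ) (σ2 : ℝ) : Measure (Fin n → ℝ) :=
  Measure.pi fun _ => gaussianReal 0 σ2.toNNReal

/-- Average (over a uniform message pair) probability of list-decoding error of the Gaussian
AVMAC code `(cx, cy, ψ)` under the state vector `s`, the receiver observing
`z̲ = x̲_m + y̲_w + s̲ + g̲`. -/
def gErrProb (n M W : ℕ) (σ2 : ℝ) (cx : Fin M → Fin n → ℝ) (cy : Fin W → Fin n → ℝ)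
    (s : Fin n → ℝ) (ψ : (Fin n → ℝ) → Finset (Fin M × Fin W)) : ℝ :=
  (1 / ((M : ℝ) * (W : ℝ))) * ∑ m, ∑ w,
    ((gaussNoise n σ2) {g | (m, w) ∉ ψ (fun i => cx m i + cy w i + s i + g i)}).toReal

instance gaussNoise_isProbabilityMeasure (n : ℕ) (σ2 : ℝ) :
    IsProbabilityMeasure (gaussNoise n σ2) := by
  unfold gaussNoise; infer_instance

lemma one_le_sum_toReal {Ω : Type*} [MeasurableSpace Ω] (μ : Measure Ω)
    [IsProbabilityMeasure μ] {ι' : Type*} (U : Finset ι') (As : ι' → Set Ω)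
    (hcov : (⋃ j ∈ U, As j) = Set.univ) :
    (1 : ℝ) ≤ ∑ j ∈ U, (μ (As j)).toReal := by
  have hle : (1 : ℝ≥0∞) ≤ ∑ j ∈ U, μ (As j) := by
    rw [show (1 : ℝ≥0∞) = μ Set.univ from (measure_univ).symm, ← hcov]
    exact measure_biUnion_finset_le U As
  have hne : ∀ j ∈ U, μ (As j) ≠ ⊤ := fun j _ => measure_ne_top μ _
  have hsne : (∑ j ∈ U, μ (As j)) ≠ ⊤ := by
    refine (ENNReal.sum_lt_top.mpr fun j hj => ?_).ne
    exact lt_top_iff_ne_top.mpr (hne j hj)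
  calc (1 : ℝ) = (1 : ℝ≥0∞).toReal := by simp
    _ ≤ (∑ j ∈ U, μ (As j)).toReal := ENNReal.toReal_mono hsne hle
    _ = ∑ j ∈ U, (μ (As j)).toReal := ENNReal.toReal_sum hne

open scoped Classical

variable {n : ℕ} {ι : Type*} [DecidableEq ι]

def ip (u v : Fin n → ℝ) : ℝ := ∑ k, u k * v k

def nsq (u : Fin n → ℝ) : ℝ := ∑ k, u k ^ 2

lemma ip_self (u : Fin n → ℝ) : ip u u = nsq u := by
  simp [ip, nsq, sq]

lemma nsq_nonneg (u : Fin n → ℝ) : 0 ≤ nsq u :=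
  Finset.sum_nonneg fun _ _ => sq_nonneg _

lemma ip_sq_le (u v : Fin n → ℝ) : (ip u v) ^ 2 ≤ nsq u * nsq v :=
  Finset.sum_mul_sq_le_sq_mul_sq _ _ _

lemma ip_le_of_le {u v : Fin n → ℝ} {E : ℝ} (hu : nsq u ≤ E) (hv : nsq v ≤ E) :
    ip u v ≤ E := by
  have h := ip_sq_le u v
  have h0 := nsq_nonneg u
  have h0' := nsq_nonneg v
  nlinarith [h, h0, h0', hu, hv]

lemma nsq_sum_expand (S : Finset ι) (f : ι → Fin n → ℝ) :
    nsq (fun k => ∑ i ∈ S, f i k) = ∑ i ∈ S, ∑ j ∈ S, ip (f i) (f j) := by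
  simp only [nsq, ip]
  have h : ∀ k : Fin n, (∑ i ∈ S, f i k) ^ 2 = ∑ i ∈ S, ∑ j ∈ S, f i k * f j k := by
    intro k; rw [sq, Finset.sum_mul_sum]
  rw [Finset.sum_congr rfl fun k _ => h k, Finset.sum_comm]
  exact Finset.sum_congr rfl fun i _ => Finset.sum_comm

lemma nsq_sub_smul (u v : Fin n → ℝ) (κ : ℝ) :
    nsq (fun k => u k - κ * v k) = nsq u - 2 * κ * ip u v + κ ^ 2 * nsq v := by
  simp only [nsq, ip]
  have h : ∀ k : Fin n, (u k - κ * v k) ^ 2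
      = u k ^ 2 - 2 * κ * (u k * v k) + κ ^ 2 * v k ^ 2 := by intro k; ring
  rw [Finset.sum_congr rfl fun k _ => h k]
  rw [Finset.sum_add_distrib, Finset.sum_sub_distrib, ← Finset.mul_sum, ← Finset.mul_sum]

lemma sib_eq (x : ι → Fin n → ℝ) (c : Fin n → ℝ) (L : ℕ) (S : Finset ι) (hS : S.card = L) :
    (fun k => (∑ i ∈ S, x i k) - (L : ℝ) * c k) = (fun k => ∑ i ∈ S, (x i k - c k)) := by
  funext k
  rw [Finset.sum_sub_distrib, Finset.sum_const, hS, nsmul_eq_mul]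

/-- The collection of `(L+1)`-subsets of `B` all of whose "sibling sums" (sum of the other `L`
codewords recentred by `L•cst`) have squared norm at most `Nt`. -/
def goodU (x : ι → Fin n → ℝ) (L : ℕ) (cst : Fin n → ℝ) (Nt : ℝ) (B : Finset ι) :
    Finset (Finset ι) :=
  (B.powersetCard (L + 1)).filter
    (fun U => ∀ j ∈ U, nsq (fun k => (∑ i ∈ U.erase j, x i k) - (L : ℝ) * cst k) ≤ Nt)

lemma mem_goodU_iff {x : ι → Fin n → ℝ} {L : ℕ} {cst : Fin n → ℝ} {Nt : ℝ} {B : Finset ι}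
    {U : Finset ι} (hU : U ∈ goodU x L cst Nt B) :
    U ∈ B.powersetCard (L + 1) ∧
      ∀ j ∈ U, nsq (fun k => (∑ i ∈ U.erase j, x i k) - (L : ℝ) * cst k) ≤ Nt := by
  unfold goodU at hU
  exact Finset.mem_filter.mp hU

/-- If the members of `U` are pairwise weakly correlated and each has energy at most `E ≤ Pt`,
then all sibling sums are short. -/
lemma sibOK_of_pairwise {L : ℕ} (hL : 1 ≤ L) (x : ι → Fin n → ℝ) (c : Fin n → ℝ)
    {E Pt τ Nt : ℝ} {U : Finset ι} (hUcard : U.card = L + 1)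
    (hUE : ∀ i ∈ U, nsq (fun k => x i k - c k) ≤ E) (hEPt : E ≤ Pt) (hτ : 0 ≤ τ)
    (hpair : ∀ i ∈ U, ∀ j ∈ U, i ≠ j →
      ip (fun k => x i k - c k) (fun k => x j k - c k) ≤ τ)
    (hLN : (L : ℝ) * Pt + (L : ℝ) ^ 2 * τ ≤ Nt) :
    ∀ j ∈ U, nsq (fun k => (∑ i ∈ U.erase j, x i k) - (L : ℝ) * c k) ≤ Nt := by
  intro j hj
  have hScard : (U.erase j).card = L := by
    rw [Finset.card_erase_of_mem hj, hUcard]; omega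
  rw [sib_eq x c L _ hScard, nsq_sum_expand]
  set r : ι → Fin n → ℝ := fun i => fun k => x i k - c k with hr
  have hE0 : 0 ≤ E := le_trans (nsq_nonneg (r j)) (hUE j hj)
  have hinner : ∀ i ∈ U.erase j, (∑ i' ∈ U.erase j, ip (r i) (r i')) ≤ E + (L : ℝ) * τ := by
    intro i hi
    rw [← Finset.add_sum_erase _ _ hi]
    have h1 : ip (r i) (r i) ≤ E := by
      rw [ip_self]; exact hUE i (Finset.mem_of_mem_erase hi)
    have h2 : ∑ i' ∈ (U.erase j).erase i, ip (r i) (r i') ≤ (L : ℝ) * τ := by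
      have hcard : ((U.erase j).erase i).card = L - 1 := by
        rw [Finset.card_erase_of_mem hi, hScard]
      calc ∑ i' ∈ (U.erase j).erase i, ip (r i) (r i')
          ≤ ∑ _i' ∈ (U.erase j).erase i, τ := by
            refine Finset.sum_le_sum fun i' hi' => ?_
            have hi'U : i' ∈ U := Finset.mem_of_mem_erase (Finset.mem_of_mem_erase hi')
            have hiU : i ∈ U := Finset.mem_of_mem_erase hi
            have hne : i ≠ i' := fun h => (Finset.mem_erase.mp hi').1 h.symm
            exact hpair i hiU i' hi'U hne
        _ = ((L - 1 : ℕ) : ℝ) * τ := by rw [Finset.sum_const, hcard, nsmul_eq_mul]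
        _ ≤ (L : ℝ) * τ := by
            have : ((L - 1 : ℕ) : ℝ) ≤ (L : ℝ) := by exact_mod_cast Nat.sub_le L 1
            exact mul_le_mul_of_nonneg_right this hτ
    linarith
  calc ∑ i ∈ U.erase j, ∑ i' ∈ U.erase j, ip (r i) (r i')
      ≤ ∑ _i ∈ U.erase j, (E + (L : ℝ) * τ) := Finset.sum_le_sum hinner
    _ = (L : ℝ) * (E + (L : ℝ) * τ) := by rw [Finset.sum_const, hScard, nsmul_eq_mul]
    _ ≤ (L : ℝ) * Pt + (L : ℝ) ^ 2 * τ := by nlinarith [hτ, hEPt, (Nat.one_le_cast (α := ℝ)).mpr hL]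
    _ ≤ Nt := hLN


/-- Core recursive extraction: either a large low-correlation subset exists (giving many good
`(L+1)`-subsets), or we can recentre and strictly decrease the energy. -/
lemma geo_rec (L : ℕ) (hL : 1 ≤ L) (x : ι → Fin n → ℝ) (Pt Nt τ θ : ℝ)
    (hτ : 0 < τ) (hPt : 0 < Pt) (hLN : (L : ℝ) * Pt + (L : ℝ) ^ 2 * τ ≤ Nt)
    (hθ : ((L : ℝ) + (L : ℝ) ^ 2) * θ ≤ Nt) :
    ∀ (j : ℕ) (A : Finset ι) (c : Fin n → ℝ) (E : ℝ),
      (∀ i ∈ A, nsq (fun k => x i k - c k) ≤ E) → E ≤ Pt →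
      E ≤ θ + j * (τ ^ 2 / Pt) →
      ∃ (B : Finset ι) (cst : Fin n → ℝ), B ⊆ A ∧
        (1 / (8 * (L : ℝ) * ((L : ℝ) + 1))) ^ j * A.card ≤ B.card ∧
        ((B.card.choose (L + 1) : ℝ) ≤ 2 * (goodU x L cst Nt B).card) := by
  have hLpos : (0 : ℝ) < L := by exact_mod_cast hL
  set δ : ℝ := 1 / (8 * (L : ℝ) * ((L : ℝ) + 1)) with hδ
  have hδpos : 0 < δ := by rw [hδ]; positivity
  have hδhalf : δ ≤ 1 / 2 := by
    have hL1 : (1 : ℝ) ≤ (L : ℝ) := by exact_mod_cast hL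
    rw [hδ, div_le_div_iff₀ (by positivity) (by norm_num)]
    nlinarith [hL1]
  -- base situation: all of `A` qualifies
  have base : ∀ (A : Finset ι) (c : Fin n → ℝ) (E : ℝ),
      (∀ i ∈ A, nsq (fun k => x i k - c k) ≤ E) → E ≤ θ →
      ((A.card.choose (L + 1) : ℝ) ≤ 2 * (goodU x L c Nt A).card) := by
    intro A c E hAE hEθ
    have hall : ∀ U ∈ A.powersetCard (L + 1),
        (∀ j ∈ U, nsq (fun k => (∑ i ∈ U.erase j, x i k) - (L : ℝ) * c k) ≤ Nt) := by
      intro U hU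
      obtain ⟨hUA, hUcard⟩ := Finset.mem_powersetCard.mp hU
      have hUne : U.Nonempty := Finset.card_pos.mp (by rw [hUcard]; omega)
      obtain ⟨i0, hi0⟩ := hUne
      have hE0 : 0 ≤ E := le_trans (nsq_nonneg _) (hAE i0 (hUA hi0))
      exact sibOK_of_pairwise hL x c hUcard (fun i hi => hAE i (hUA hi)) (le_refl E) hE0
        (fun i hi j hj _ => ip_le_of_le (hAE i (hUA hi)) (hAE j (hUA hj)))
        (by nlinarith)
    have hgU : goodU x L c Nt A = A.powersetCard (L + 1) := by
      unfold goodU; exact Finset.filter_true_of_mem hall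
    rw [hgU, Finset.card_powersetCard]
    have : (0 : ℝ) ≤ (A.card.choose (L + 1) : ℝ) := by positivity
    linarith
  intro j
  induction j with
  | zero =>
    intro A c E hAE hEPt hEj
    simp only [Nat.cast_zero, zero_mul, add_zero] at hEj
    exact ⟨A, c, subset_rfl, by simp, base A c E hAE hEj⟩
  | succ j ih =>
    intro A c E hAE hEPt hEj
    by_cases hEθ : E ≤ θ
    · refine ⟨A, c, subset_rfl, ?_, base A c E hAE hEθ⟩
      have h1 : δ ^ (j + 1) ≤ 1 := pow_le_one₀ hδpos.le (by linarith)
      nlinarith [Nat.cast_nonneg (α := ℝ) A.card]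
    · -- main case
      set r : ι → Fin n → ℝ := fun i k => x i k - c k with hr
      set deg : ι → ℕ := fun jj => (A.filter (fun i => i ≠ jj ∧ τ < ip (r i) (r jj))).card
        with hdeg
      set Alow := A.filter (fun jj => (deg jj : ℝ) ≤ δ * A.card) with hAlowdef
      by_cases hsplit : (A.card : ℝ) ≤ 2 * Alow.card
      · -- CASE A : terminate with the low-degree part
        refine ⟨Alow, c, Finset.filter_subset _ _, ?_, ?_⟩
        · have h0 : δ ^ j ≤ 1 := pow_le_one₀ hδpos.le (by linarith)
          have h1 : δ ^ (j + 1) ≤ 1 / 2 := by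
            calc δ ^ (j + 1) = δ ^ j * δ := by ring
              _ ≤ 1 * δ := by nlinarith
              _ ≤ 1 / 2 := by linarith
          nlinarith [Nat.cast_nonneg (α := ℝ) A.card]
        · set K := Alow.card with hK
          by_cases hK2 : K ≤ 1
          · have hch : K.choose (L + 1) = 0 := Nat.choose_eq_zero_of_lt (by omega)
            rw [hch]
            have : (0 : ℝ) ≤ ((goodU x L c Nt Alow).card : ℝ) := by positivity
            push_cast; linarith
          · push_neg at hK2
            obtain ⟨k2, hk2⟩ : ∃ k2, K = k2 + 2 := ⟨K - 2, by omega⟩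
            obtain ⟨l1, hl1⟩ : ∃ l1, L = l1 + 1 := ⟨L - 1, by omega⟩
            set pairGood : Finset ι → Prop :=
              fun U => ∀ i ∈ U, ∀ jj ∈ U, i ≠ jj → ip (r i) (r jj) ≤ τ with hpairGood
            set Pg := (Alow.powersetCard (L + 1)).filter pairGood with hPg
            set Pb := (Alow.powersetCard (L + 1)).filter (fun U => ¬ pairGood U) with hPb
            have hsplitcard : Pg.card + Pb.card = K.choose (L + 1) := by
              rw [hPg, hPb, Finset.card_filter_add_card_filter_not,
                Finset.card_powersetCard]
            set badpairs := (Alow ×ˢ Alow).filter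
              (fun p => p.1 ≠ p.2 ∧ τ < ip (r p.1) (r p.2)) with hbadpairs
            have hsubbad : Pb ⊆ badpairs.biUnion (fun p =>
                ((((Alow.erase p.1).erase p.2)).powersetCard (L - 1)).image
                  (fun V => insert p.1 (insert p.2 V))) := by
              intro U hU
              obtain ⟨hUP, hnp⟩ := Finset.mem_filter.mp hU
              obtain ⟨hUsub, hUcard⟩ := Finset.mem_powersetCard.mp hUP
              have hnp' : ¬ (∀ i ∈ U, ∀ jj ∈ U, i ≠ jj → ip (r i) (r jj) ≤ τ) := by
                rw [hpairGood] at hnp; exact hnp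
              push_neg at hnp'
              obtain ⟨i, hi, jj, hjj, hij, hbad⟩ := hnp'
              refine Finset.mem_biUnion.mpr ⟨(i, jj), ?_, ?_⟩
              · exact Finset.mem_filter.mpr
                  ⟨Finset.mem_product.mpr ⟨hUsub hi, hUsub hjj⟩, hij, hbad⟩
              · refine Finset.mem_image.mpr ⟨(U.erase i).erase jj, ?_, ?_⟩
                · refine Finset.mem_powersetCard.mpr ⟨?_, ?_⟩
                  · exact Finset.erase_subset_erase jj (Finset.erase_subset_erase i hUsub)
                  · have hjji : jj ∈ U.erase i :=
                      Finset.mem_erase.mpr ⟨fun h => hij h.symm, hjj⟩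
                    rw [Finset.card_erase_of_mem hjji, Finset.card_erase_of_mem hi, hUcard]
                    omega
                · apply Finset.ext
                  intro a
                  simp only [Finset.mem_insert, Finset.mem_erase]
                  constructor
                  · rintro (rfl | rfl | ⟨_, _, ha⟩)
                    · exact hi
                    · exact hjj
                    · exact ha
                  · intro ha
                    by_cases h1 : a = i
                    · exact Or.inl h1
                    · by_cases h2 : a = jj
                      · exact Or.inr (Or.inl h2)
                      · exact Or.inr (Or.inr ⟨h2, h1, ha⟩)
            have hbadUcard : Pb.card ≤ badpairs.card * Nat.choose (K - 2) (L - 1) := by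
              calc Pb.card ≤ _ := Finset.card_le_card hsubbad
                _ ≤ ∑ p ∈ badpairs,
                    ((((Alow.erase p.1).erase p.2)).powersetCard (L - 1)).card :=
                  le_trans Finset.card_biUnion_le
                    (Finset.sum_le_sum fun p _ => Finset.card_image_le)
                _ ≤ ∑ _p ∈ badpairs, Nat.choose (K - 2) (L - 1) := by
                  refine Finset.sum_le_sum fun p hp => ?_
                  obtain ⟨hmem, hne, _⟩ := Finset.mem_filter.mp hp
                  obtain ⟨h1, h2⟩ := Finset.mem_product.mp hmem
                  rw [Finset.card_powersetCard]
                  have h2' : p.2 ∈ Alow.erase p.1 :=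
                    Finset.mem_erase.mpr ⟨fun h => hne h.symm, h2⟩
                  rw [Finset.card_erase_of_mem h2', Finset.card_erase_of_mem h1, ← hK,
                    Nat.sub_sub]
                _ = badpairs.card * Nat.choose (K - 2) (L - 1) := by
                  rw [Finset.sum_const, smul_eq_mul]
            have hbadpairscard : (badpairs.card : ℝ) ≤ (K : ℝ) * (δ * A.card) := by
              have hfib : badpairs.card
                  = ∑ jj ∈ Alow, (badpairs.filter (fun p => p.2 = jj)).card :=
                Finset.card_eq_sum_card_fiberwise
                  (fun p hp => (Finset.mem_product.mp (Finset.mem_filter.mp hp).1).2)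
              have hfible : ∀ jj ∈ Alow,
                  (badpairs.filter (fun p => p.2 = jj)).card ≤ deg jj := by
                intro jj hjj
                rw [hdeg]
                apply Finset.card_le_card_of_injOn (fun p => p.1)
                · intro p hp
                  obtain ⟨hpb, hp2⟩ := Finset.mem_filter.mp hp
                  obtain ⟨hmem, hne, hbad⟩ := Finset.mem_filter.mp hpb
                  obtain ⟨h1, _⟩ := Finset.mem_product.mp hmem
                  refine Finset.mem_filter.mpr ⟨Finset.filter_subset _ _ h1, ?_, ?_⟩
                  · rw [← hp2]; exact hne
                  · rw [← hp2]; exact hbad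
                · intro p hp q hq hpq
                  have hp2 := (Finset.mem_filter.mp hp).2
                  have hq2 := (Finset.mem_filter.mp hq).2
                  exact Prod.ext hpq (hp2.trans hq2.symm)
              calc (badpairs.card : ℝ)
                  = ∑ jj ∈ Alow, ((badpairs.filter (fun p => p.2 = jj)).card : ℝ) := by
                    rw [hfib]; push_cast; rfl
                _ ≤ ∑ jj ∈ Alow, (δ * A.card) := by
                    refine Finset.sum_le_sum fun jj hjj => ?_
                    refine le_trans ?_ ((Finset.mem_filter.mp hjj).2)
                    exact_mod_cast hfible jj hjj
                _ = (K : ℝ) * (δ * A.card) := by rw [Finset.sum_const, nsmul_eq_mul]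
            have e4 : k2 + 1 + 1 = k2 + 2 := by omega
            have e5 : l1 + 1 + 1 = l1 + 2 := by omega
            have hid : ((k2 + 2) * (k2 + 1)) * Nat.choose k2 l1
                = ((l1 + 2) * (l1 + 1)) * Nat.choose (k2 + 2) (l1 + 2) := by
              have A1 := Nat.add_one_mul_choose_eq k2 l1
              have A2 := Nat.add_one_mul_choose_eq (k2 + 1) (l1 + 1)
              rw [e4, e5] at A2
              calc ((k2 + 2) * (k2 + 1)) * Nat.choose k2 l1
                  = (k2 + 2) * ((k2 + 1) * Nat.choose k2 l1) := by ring
                _ = (k2 + 2) * (Nat.choose (k2 + 1) (l1 + 1) * (l1 + 1)) := by rw [A1]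
                _ = ((k2 + 2) * Nat.choose (k2 + 1) (l1 + 1)) * (l1 + 1) := by ring
                _ = (Nat.choose (k2 + 2) (l1 + 2) * (l1 + 2)) * (l1 + 1) := by rw [A2]
                _ = ((l1 + 2) * (l1 + 1)) * Nat.choose (k2 + 2) (l1 + 2) := by ring
            have hPgsub : Pg ⊆ goodU x L c Nt Alow := by
              intro U hU
              obtain ⟨hUP, hpg⟩ := Finset.mem_filter.mp hU
              obtain ⟨hUsub, hUcard⟩ := Finset.mem_powersetCard.mp hUP
              refine Finset.mem_filter.mpr ⟨hUP, ?_⟩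
              exact sibOK_of_pairwise hL x c hUcard
                (fun i hi => hAE i (Finset.filter_subset _ _ (hUsub hi))) hEPt hτ.le
                (fun i hi jj hjj hij => hpg i hi jj hjj hij) hLN
            have hKr : (2 : ℝ) ≤ (K : ℝ) := by exact_mod_cast hK2
            have hbhalf : (Pb.card : ℝ) ≤ (1 / 2) * (Nat.choose K (L + 1) : ℝ) := by
              have hc1 : (Pb.card : ℝ)
                  ≤ (badpairs.card : ℝ) * (Nat.choose (K - 2) (L - 1) : ℝ) := by
                exact_mod_cast hbadUcard
              have hc2 : (badpairs.card : ℝ) * (Nat.choose (K - 2) (L - 1) : ℝ)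
                  ≤ ((K : ℝ) * (δ * A.card)) * (Nat.choose (K - 2) (L - 1) : ℝ) := by
                exact mul_le_mul_of_nonneg_right hbadpairscard (by positivity)
              have hc3 : ((K : ℝ) * (δ * A.card)) * (Nat.choose (K - 2) (L - 1) : ℝ)
                  ≤ ((K : ℝ) * (δ * (2 * K))) * (Nat.choose (K - 2) (L - 1) : ℝ) := by
                have : δ * (A.card : ℝ) ≤ δ * (2 * K) := by
                  refine mul_le_mul_of_nonneg_left ?_ hδpos.le
                  exact_mod_cast hsplit
                refine mul_le_mul_of_nonneg_right ?_ (by positivity)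
                exact mul_le_mul_of_nonneg_left this (by positivity)
              have hc4 : ((K : ℝ) * (δ * (2 * K))) * (Nat.choose (K - 2) (L - 1) : ℝ)
                  ≤ (4 * δ) * (((K : ℝ) * ((K : ℝ) - 1)) * (Nat.choose (K - 2) (L - 1) : ℝ)) := by
                have hsq : (K : ℝ) * (2 * K) ≤ 4 * ((K : ℝ) * ((K : ℝ) - 1)) := by nlinarith
                have hcn : (0 : ℝ) ≤ (Nat.choose (K - 2) (L - 1) : ℝ) := by positivity
                nlinarith [mul_le_mul_of_nonneg_right hsq hcn, hδpos]
              have hidr : ((K : ℝ) * ((K : ℝ) - 1)) * (Nat.choose (K - 2) (L - 1) : ℝ)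
                  = (((L : ℝ) + 1) * L) * (Nat.choose K (L + 1) : ℝ) := by
                rw [hk2, hl1]
                have e2 : k2 + 2 - 2 = k2 := by omega
                have e3 : l1 + 1 - 1 = l1 := by omega
                rw [e2, e3, e5]
                push_cast
                have hcast := congrArg (fun t : ℕ => (t : ℝ)) hid
                push_cast at hcast
                linear_combination hcast
              have hfin : (4 * δ) * ((((L : ℝ) + 1) * L) * (Nat.choose K (L + 1) : ℝ))
                  = (1 / 2) * (Nat.choose K (L + 1) : ℝ) := by
                rw [hδ]
                field_simp
                ring
              calc (Pb.card : ℝ) ≤ _ := hc1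
                _ ≤ _ := hc2
                _ ≤ _ := hc3
                _ ≤ _ := hc4
                _ = (4 * δ) * ((((L : ℝ) + 1) * L) * (Nat.choose K (L + 1) : ℝ)) := by
                    rw [hidr]
                _ = _ := hfin
            have hcastsum : (Pg.card : ℝ) + (Pb.card : ℝ) = (Nat.choose K (L + 1) : ℝ) := by
              exact_mod_cast congrArg Nat.cast hsplitcard
            have hgood2 : (Pg.card : ℝ) ≤ ((goodU x L c Nt Alow).card : ℝ) := by
              exact_mod_cast Finset.card_le_card hPgsub
            linarith
      · -- CASE B : recentre and recurse
        push_neg at hsplit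
        have hAlowsub : Alow ⊆ A := Finset.filter_subset _ _
        have hAlowlt : Alow.card < A.card := by
          by_contra hcon
          push_neg at hcon
          have h1 : (A.card : ℝ) ≤ (Alow.card : ℝ) := by exact_mod_cast hcon
          have h0 : (0 : ℝ) ≤ (Alow.card : ℝ) := by positivity
          linarith
        have hAne : (A \ Alow).Nonempty := by
          rw [← Finset.card_pos, Finset.card_sdiff_of_subset hAlowsub]
          omega
        obtain ⟨istar, histar⟩ := hAne
        have histarA : istar ∈ A := (Finset.mem_sdiff.mp histar).1
        have histardeg : δ * A.card < ((deg istar : ℕ) : ℝ) := by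
          have h2 := (Finset.mem_sdiff.mp histar).2
          rw [hAlowdef, Finset.mem_filter] at h2
          push_neg at h2
          exact h2 histarA
        set A' := A.filter (fun i => i ≠ istar ∧ τ < ip (r i) (r istar)) with hA'
        have hA'card : δ * A.card < (A'.card : ℝ) := histardeg
        have hA'sub : A' ⊆ A := Finset.filter_subset _ _
        set d := r istar with hd
        set D := nsq d with hD'
        have hDE : D ≤ E := hAE istar histarA
        have hA'ne : A'.Nonempty := by
          rw [← Finset.card_pos]
          by_contra hcon
          push_neg at hcon
          have h0 : A'.card = 0 := by omega
          rw [h0] at hA'card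
          have h1 : (0 : ℝ) ≤ δ * A.card := by positivity
          norm_num at hA'card
          linarith
        obtain ⟨j1, hj1⟩ := hA'ne
        have hj1bad : τ < ip (r j1) d := ((Finset.mem_filter.mp hj1).2).2
        have hD : 0 < D := by
          rcases lt_or_ge 0 D with h | h
          · exact h
          · exfalso
            have hD0 : D = 0 := le_antisymm h (nsq_nonneg d)
            have hsq := ip_sq_le (r j1) d
            rw [← hD', hD0, mul_zero] at hsq
            nlinarith [hj1bad, hτ]
        set κ := τ / D with hκ
        set c' : Fin n → ℝ := fun k => c k + κ * d k with hc'
        have hnewE : ∀ i ∈ A', nsq (fun k => x i k - c' k) ≤ E - τ ^ 2 / Pt := by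
          intro i hi
          obtain ⟨hiA, _, hipa⟩ := Finset.mem_filter.mp hi
          have heq : (fun k => x i k - c' k) = (fun k => r i k - κ * d k) := by
            funext k
            simp only [hc', hr]
            ring
          rw [heq, nsq_sub_smul]
          have h1 : nsq (r i) ≤ E := hAE i hiA
          have hκ2 : κ ^ 2 * D = τ ^ 2 / D := by
            rw [hκ]; field_simp
          have hκnn : 0 ≤ κ := by rw [hκ]; positivity
          have h2 : 2 * κ * τ ≤ 2 * κ * ip (r i) d := by nlinarith [hipa]
          have h3 : 2 * κ * τ = 2 * (τ ^ 2 / D) := by rw [hκ]; field_simp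
          have h4 : τ ^ 2 / Pt ≤ τ ^ 2 / D := by
            rw [div_le_div_iff₀ hPt hD]
            exact mul_le_mul_of_nonneg_left (hDE.trans hEPt) (sq_nonneg τ)
          linarith
        have hreq : E - τ ^ 2 / Pt ≤ θ + j * (τ ^ 2 / Pt) := by
          push_cast at hEj
          linarith
        have hEPt' : E - τ ^ 2 / Pt ≤ Pt := by
          have : (0 : ℝ) < τ ^ 2 / Pt := by positivity
          linarith
        obtain ⟨B, cst, hBsub, hBcard, hBgood⟩ := ih A' c' (E - τ ^ 2 / Pt) hnewE hEPt' hreq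
        refine ⟨B, cst, hBsub.trans hA'sub, ?_, hBgood⟩
        have hδj : (0 : ℝ) ≤ δ ^ j := by positivity
        calc δ ^ (j + 1) * A.card = δ ^ j * (δ * A.card) := by ring
          _ ≤ δ ^ j * A'.card := mul_le_mul_of_nonneg_left hA'card.le hδj
          _ ≤ B.card := hBcard


theorem gaussian_avmac_list_decoding_converse_zero_rate
    (L : ℕ) (hL : 1 ≤ L) (P₁ P₂ N σ2 : ℝ)
    (hP₁ : 0 < P₁) (hP₂ : 0 < P₂) (hN : 0 < N) (hσ2 : 0 < σ2)
    (h₁ : (L : ℝ) * P₁ < N) (h₂ : (L : ℝ) * P₂ < N)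
    (M W : ℕ → ℕ)
    (cx : ∀ n, Fin (M n) → Fin n → ℝ) (cy : ∀ n, Fin (W n) → Fin n → ℝ)
    (ψ : ∀ n, (Fin n → ℝ) → Finset (Fin (M n) × Fin (W n)))
    (hpow₁ : ∀ n m, ∑ i, (cx n m i) ^ 2 ≤ (n : ℝ) * P₁)
    (hpow₂ : ∀ n w, ∑ i, (cy n w i) ^ 2 ≤ (n : ℝ) * P₂)
    (hlist : ∀ n z, (ψ n z).card ≤ L)
    (hM : Tendsto M atTop atTop) (hW : Tendsto W atTop atTop) :
    ∃ c > (0 : ℝ), ∃ n₀ : ℕ, ∀ n ≥ n₀,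
      ∃ s : Fin n → ℝ, ∑ i, (s i) ^ 2 ≤ (n : ℝ) * N ∧
        c ≤ gErrProb n (M n) (W n) σ2 (cx n) (cy n) s (ψ n) := by
  have hL0 : (0 : ℝ) < L := by exact_mod_cast hL
  have hL1 : (1 : ℝ) ≤ (L : ℝ) := by exact_mod_cast hL
  set ε₁ : ℝ := min ((N - L * P₁) / (L : ℝ) ^ 2) (N / ((L : ℝ) + (L : ℝ) ^ 2)) with hε₁def
  have hε₁ : 0 < ε₁ := by
    apply lt_min
    · apply div_pos (by linarith) (by positivity)
    · apply div_pos hN (by positivity)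
  set j₀ : ℕ := Nat.ceil ((P₁ / ε₁) ^ 2) with hj₀def
  set ρ : ℝ := (1 / (8 * (L : ℝ) * ((L : ℝ) + 1))) ^ j₀ with hρdef
  have hρ : 0 < ρ := by rw [hρdef]; positivity
  set c₀ : ℝ := (ρ / 2) ^ (L + 1) * (1 / (2 * (Nat.factorial (L + 1) : ℝ))) with hc₀def
  have hfactpos : (0 : ℝ) < (Nat.factorial (L + 1) : ℝ) := by
    exact_mod_cast Nat.factorial_pos (L + 1)
  have hc₀ : 0 < c₀ := by rw [hc₀def]; positivity
  set M₀ : ℕ := Nat.ceil ((2 * (L : ℝ) + 2) / ρ) + 1 with hM₀def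
  obtain ⟨n₁, hn₁⟩ := Filter.eventually_atTop.mp (hM.eventually_ge_atTop M₀)
  obtain ⟨n₂, hn₂⟩ := Filter.eventually_atTop.mp (hW.eventually_ge_atTop 1)
  refine ⟨c₀, hc₀, max (max n₁ n₂) 1, ?_⟩
  intro n hn
  have hnM : M₀ ≤ M n :=
    hn₁ n (le_trans (le_trans (le_max_left _ _) (le_max_left _ _)) hn)
  have hnW : 1 ≤ W n :=
    hn₂ n (le_trans (le_trans (le_max_right _ _) (le_max_left _ _)) hn)
  have hn1 : 1 ≤ n := le_trans (le_max_right _ _) hn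
  have hnR : (1 : ℝ) ≤ (n : ℝ) := by exact_mod_cast hn1
  have hnpos : (0 : ℝ) < (n : ℝ) := by linarith
  have hMnpos : 0 < M n := lt_of_lt_of_le (by rw [hM₀def]; omega) hnM
  have hMnR : (0 : ℝ) < (M n : ℝ) := by exact_mod_cast hMnpos
  have hWnR : (0 : ℝ) < (W n : ℝ) := by exact_mod_cast hnW
  -- instantiate the geometric extraction
  set Pt : ℝ := (n : ℝ) * P₁ with hPtdef
  set Nt : ℝ := (n : ℝ) * N with hNtdef
  set τ : ℝ := (n : ℝ) * ε₁ with hτdef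
  set θ : ℝ := (n : ℝ) * N / ((L : ℝ) + (L : ℝ) ^ 2) with hθdef
  have hτpos : 0 < τ := by rw [hτdef]; positivity
  have hPtpos : 0 < Pt := by rw [hPtdef]; positivity
  have hLN : (L : ℝ) * Pt + (L : ℝ) ^ 2 * τ ≤ Nt := by
    have h := min_le_left ((N - L * P₁) / (L : ℝ) ^ 2) (N / ((L : ℝ) + (L : ℝ) ^ 2))
    rw [← hε₁def] at h
    have h' : ε₁ * (L : ℝ) ^ 2 ≤ N - L * P₁ := (le_div_iff₀ (by positivity)).mp h
    rw [hPtdef, hτdef, hNtdef]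
    nlinarith [h', hnpos]
  have hθle : ((L : ℝ) + (L : ℝ) ^ 2) * θ ≤ Nt := by
    rw [hθdef, hNtdef]
    have hd : ((L : ℝ) + (L : ℝ) ^ 2) ≠ 0 := by positivity
    field_simp
    exact le_rfl
  have hE0j : Pt ≤ θ + (j₀ : ℝ) * (τ ^ 2 / Pt) := by
    have hj₀ : ((P₁ / ε₁) ^ 2 : ℝ) ≤ (j₀ : ℕ) := Nat.le_ceil _
    have hτ2 : τ ^ 2 / Pt = (n : ℝ) * (ε₁ ^ 2 / P₁) := by
      rw [hτdef, hPtdef]; field_simp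
    have hθ0 : 0 ≤ θ := by rw [hθdef]; positivity
    have key : (P₁ / ε₁) ^ 2 * (ε₁ ^ 2 / P₁) = P₁ := by field_simp
    have h1 : (P₁ / ε₁) ^ 2 * (ε₁ ^ 2 / P₁) ≤ (j₀ : ℝ) * (ε₁ ^ 2 / P₁) :=
      mul_le_mul_of_nonneg_right hj₀ (by positivity)
    calc Pt = (n : ℝ) * ((P₁ / ε₁) ^ 2 * (ε₁ ^ 2 / P₁)) := by rw [hPtdef, key]
      _ ≤ (n : ℝ) * ((j₀ : ℝ) * (ε₁ ^ 2 / P₁)) := by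
          exact mul_le_mul_of_nonneg_left h1 hnpos.le
      _ = (j₀ : ℝ) * (τ ^ 2 / Pt) := by rw [hτ2]; ring
      _ ≤ θ + (j₀ : ℝ) * (τ ^ 2 / Pt) := le_add_of_nonneg_left hθ0
  obtain ⟨B, cst, hBsub, hBcard, hBgood⟩ :=
    geo_rec L hL (cx n) Pt Nt τ θ hτpos hPtpos hLN hθle j₀
      Finset.univ (fun _ => 0) Pt
      (fun i _ => by simpa [nsq] using hpow₁ n i) le_rfl hE0j
  simp only [Finset.card_univ, Fintype.card_fin] at hBcard
  rw [← hρdef] at hBcard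
  -- size bookkeeping
  have hρM : 2 * (L : ℝ) + 2 ≤ ρ * (M n : ℝ) := by
    have hceil : ((2 * (L : ℝ) + 2) / ρ) ≤ (Nat.ceil ((2 * (L : ℝ) + 2) / ρ) : ℝ) :=
      Nat.le_ceil _
    have hM₀R : ((2 * (L : ℝ) + 2) / ρ) ≤ (M₀ : ℝ) := by
      rw [hM₀def]; push_cast; linarith
    have hMge : (M₀ : ℝ) ≤ (M n : ℝ) := by exact_mod_cast hnM
    have := hM₀R.trans hMge
    calc 2 * (L : ℝ) + 2 = ((2 * (L : ℝ) + 2) / ρ) * ρ := by field_simp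
      _ ≤ (M n : ℝ) * ρ := mul_le_mul_of_nonneg_right this hρ.le
      _ = ρ * (M n : ℝ) := by ring
  have hKge : ρ * (M n : ℝ) ≤ (B.card : ℝ) := hBcard
  have hLleK : L + 1 ≤ B.card := by
    have : (L : ℝ) + 1 ≤ (B.card : ℝ) := by linarith
    exact_mod_cast this
  have hKmL : ρ * (M n : ℝ) / 2 ≤ ((B.card - L : ℕ) : ℝ) := by
    have hc : ((B.card - L : ℕ) : ℝ) = (B.card : ℝ) - (L : ℝ) := by
      rw [Nat.cast_sub (by omega)]
    rw [hc]
    have hhalf : (L : ℝ) ≤ ρ * (M n : ℝ) / 2 := by linarith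
    linarith
  -- many good (L+1)-subsets
  set 𝒰 := goodU (cx n) L cst Nt B with h𝒰def
  have h𝒰low : c₀ * (M n : ℝ) ^ (L + 1) ≤ (𝒰.card : ℝ) := by
    have hdesc : (B.card - L) ^ (L + 1) ≤ Nat.descFactorial B.card (L + 1) := by
      have h := Nat.pow_sub_le_descFactorial B.card (L + 1)
      have he : B.card + 1 - (L + 1) = B.card - L := by omega
      rwa [he] at h
    have hdesc2 : Nat.descFactorial B.card (L + 1)
        = Nat.factorial (L + 1) * Nat.choose B.card (L + 1) :=
      Nat.descFactorial_eq_factorial_mul_choose _ _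
    have h1 : (((B.card - L : ℕ) : ℝ)) ^ (L + 1)
        ≤ (Nat.factorial (L + 1) : ℝ) * (Nat.choose B.card (L + 1) : ℝ) := by
      rw [hdesc2] at hdesc
      exact_mod_cast hdesc
    have h2 : (ρ * (M n : ℝ) / 2) ^ (L + 1) ≤ (((B.card - L : ℕ) : ℝ)) ^ (L + 1) :=
      pow_le_pow_left₀ (by positivity) hKmL _
    have h3 : (Nat.choose B.card (L + 1) : ℝ) ≤ 2 * (𝒰.card : ℝ) := hBgood
    have h4 : (ρ * (M n : ℝ) / 2) ^ (L + 1)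
        ≤ (Nat.factorial (L + 1) : ℝ) * (2 * (𝒰.card : ℝ)) := by
      calc (ρ * (M n : ℝ) / 2) ^ (L + 1) ≤ _ := h2.trans h1
        _ ≤ (Nat.factorial (L + 1) : ℝ) * (2 * (𝒰.card : ℝ)) :=
          mul_le_mul_of_nonneg_left h3 (by positivity)
    have hexp : (ρ / 2) ^ (L + 1) * (M n : ℝ) ^ (L + 1) = (ρ * (M n : ℝ) / 2) ^ (L + 1) := by
      rw [← mul_pow]; ring_nf
    rw [hc₀def]
    calc (ρ / 2) ^ (L + 1) * (1 / (2 * (Nat.factorial (L + 1) : ℝ))) * (M n : ℝ) ^ (L + 1)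
        = (ρ * (M n : ℝ) / 2) ^ (L + 1) * (1 / (2 * (Nat.factorial (L + 1) : ℝ))) := by
          rw [← hexp]; ring
      _ ≤ ((Nat.factorial (L + 1) : ℝ) * (2 * (𝒰.card : ℝ)))
            * (1 / (2 * (Nat.factorial (L + 1) : ℝ))) :=
          mul_le_mul_of_nonneg_right h4 (by positivity)
      _ = (𝒰.card : ℝ) := by field_simp
  -- the jamming vectors and error accounting
  set μn := gaussNoise n σ2 with hμn
  set sv : Finset (Fin (M n)) → (Fin n → ℝ) :=
    fun S => fun k => (∑ i ∈ S, cx n i k) - (L : ℝ) * cst k with hsv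
  set pr : Fin (M n) → Fin (W n) → Finset (Fin (M n)) → ℝ :=
    fun mm ww S =>
      (μn {g | (mm, ww) ∉ ψ n (fun i => cx n mm i + cy n ww i + sv S i + g i)}).toReal
    with hpr
  set e : Finset (Fin (M n)) → ℝ :=
    fun S => gErrProb n (M n) (W n) σ2 (cx n) (cy n) (sv S) (ψ n) with he
  have hgErr : ∀ S, e S
      = (1 / ((M n : ℝ) * (W n : ℝ))) * ∑ mm, ∑ ww, pr mm ww S := fun S => rfl
  set comp : Finset (Fin (M n)) → Finset (Fin (M n)) :=
    fun S => Finset.univ.filter (fun mm => mm ∉ S ∧ insert mm S ∈ 𝒰) with hcomp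
  set 𝒮 := (𝒰.sigma (fun U => U)).image (fun p => p.1.erase p.2) with h𝒮def
  have hUcard : ∀ U ∈ 𝒰, U.card = L + 1 := by
    intro U hU
    exact (Finset.mem_powersetCard.mp (mem_goodU_iff hU).1).2
  -- step 3 : one forced error per (U, w)
  have step3 : ∀ U ∈ 𝒰, ∀ ww : Fin (W n),
      (1 : ℝ) ≤ ∑ jj ∈ U, pr jj ww (U.erase jj) := by
    intro U hU ww
    set Z : Fin n → ℝ :=
      fun i => (∑ i' ∈ U, cx n i' i) - (L : ℝ) * cst i + cy n ww i with hZ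
    have hAs : ∀ jj ∈ U,
        {g : Fin n → ℝ | (jj, ww) ∉ ψ n (fun i => cx n jj i + cy n ww i + sv (U.erase jj) i + g i)}
          = {g : Fin n → ℝ | (jj, ww) ∉ ψ n (fun i => Z i + g i)} := by
      intro jj hjj
      have harg : ∀ g : Fin n → ℝ,
          (fun i => cx n jj i + cy n ww i + sv (U.erase jj) i + g i)
            = (fun i => Z i + g i) := by
        intro g; funext i
        have hsum := Finset.add_sum_erase U (fun i' => cx n i' i) hjj
        simp only [hZ, hsv]
        linarith [hsum]
      ext g
      simp only [Set.mem_setOf_eq]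
      rw [harg g]
    have hcov : (⋃ jj ∈ U, {g : Fin n → ℝ | (jj, ww) ∉ ψ n (fun i => Z i + g i)})
        = Set.univ := by
      rw [Set.eq_univ_iff_forall]
      intro g
      by_contra hcon
      simp only [Set.mem_iUnion, Set.mem_setOf_eq, not_exists] at hcon
      push_neg at hcon
      have hsub : U.image (fun jj => (jj, ww)) ⊆ ψ n (fun i => Z i + g i) := by
        intro p hp
        obtain ⟨jj, hjj, rfl⟩ := Finset.mem_image.mp hp
        exact hcon jj hjj
      have hinj : (U.image (fun jj => (jj, ww))).card = U.card :=
        Finset.card_image_of_injective U (fun a b h => (Prod.ext_iff.mp h).1)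
      have hcard := Finset.card_le_card hsub
      rw [hinj, hUcard U hU] at hcard
      have := hlist n (fun i => Z i + g i)
      omega
    have hone := one_le_sum_toReal μn U
      (fun jj => {g : Fin n → ℝ | (jj, ww) ∉ ψ n (fun i => Z i + g i)}) hcov
    calc (1 : ℝ) ≤ _ := hone
      _ = ∑ jj ∈ U, pr jj ww (U.erase jj) := by
          refine Finset.sum_congr rfl fun jj hjj => ?_
          simp only [hpr]
          rw [hAs jj hjj]
  -- step 2 : regroup the double sum
  set F : Finset (Fin (M n)) → Fin (M n) → ℝ := fun S mm => ∑ ww, pr mm ww S with hFdef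
  have hmidEq : ∑ x ∈ 𝒮.sigma comp, F x.1 x.2
      = ∑ x ∈ 𝒰.sigma (fun U => U), F (x.1.erase x.2) x.2 := by
    refine Finset.sum_nbij'
      (i := fun (p : (_ : Finset (Fin (M n))) × Fin (M n)) =>
        (⟨insert p.2 p.1, p.2⟩ : (_ : Finset (Fin (M n))) × Fin (M n)))
      (j := fun (q : (_ : Finset (Fin (M n))) × Fin (M n)) =>
        (⟨q.1.erase q.2, q.2⟩ : (_ : Finset (Fin (M n))) × Fin (M n)))
      ?_ ?_ ?_ ?_ ?_
    · rintro ⟨S, mm⟩ hp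
      obtain ⟨hS, hmm⟩ := Finset.mem_sigma.mp hp
      obtain ⟨-, hins⟩ := (Finset.mem_filter.mp hmm).2
      exact Finset.mem_sigma.mpr ⟨hins, Finset.mem_insert_self _ _⟩
    · rintro ⟨U, jj⟩ hq
      obtain ⟨hU, hjj⟩ := Finset.mem_sigma.mp hq
      refine Finset.mem_sigma.mpr ⟨?_, ?_⟩
      · exact Finset.mem_image.mpr ⟨⟨U, jj⟩, Finset.mem_sigma.mpr ⟨hU, hjj⟩, rfl⟩
      · refine Finset.mem_filter.mpr ⟨Finset.mem_univ _, Finset.notMem_erase _ _, ?_⟩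
        rw [Finset.insert_erase hjj]
        exact hU
    · rintro ⟨S, mm⟩ hp
      obtain ⟨hS, hmm⟩ := Finset.mem_sigma.mp hp
      have hnotmem : mm ∉ S := (Finset.mem_filter.mp hmm).2.1
      simp [Finset.erase_insert hnotmem]
    · rintro ⟨U, jj⟩ hq
      obtain ⟨hU, hjj⟩ := Finset.mem_sigma.mp hq
      simp [Finset.insert_erase hjj]
    · rintro ⟨S, mm⟩ hp
      obtain ⟨hS, hmm⟩ := Finset.mem_sigma.mp hp
      have hnotmem : mm ∉ S := (Finset.mem_filter.mp hmm).2.1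
      simp only
      rw [Finset.erase_insert hnotmem]
  have step2 : ∑ S ∈ 𝒮, ∑ mm ∈ comp S, F S mm
      = ∑ U ∈ 𝒰, ∑ jj ∈ U, F (U.erase jj) jj := by
    calc ∑ S ∈ 𝒮, ∑ mm ∈ comp S, F S mm
        = ∑ x ∈ 𝒮.sigma comp, F x.1 x.2 := (Finset.sum_sigma 𝒮 comp (fun x => F x.1 x.2)).symm
      _ = ∑ x ∈ 𝒰.sigma (fun U => U), F (x.1.erase x.2) x.2 := hmidEq
      _ = ∑ U ∈ 𝒰, ∑ jj ∈ U, F (U.erase jj) jj :=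
          Finset.sum_sigma 𝒰 (fun U => U) (fun x => F (x.1.erase x.2) x.2)
  -- step D : total error of the jam family
  have stepD : (𝒰.card : ℝ) / (M n : ℝ) ≤ ∑ S ∈ 𝒮, e S := by
    have hprpos : ∀ mm ww S, 0 ≤ pr mm ww S := fun mm ww S => ENNReal.toReal_nonneg
    have hfrac : (0 : ℝ) ≤ 1 / ((M n : ℝ) * (W n : ℝ)) := by positivity
    have hstep1 : ∀ S ∈ 𝒮,
        (1 / ((M n : ℝ) * (W n : ℝ))) * ∑ mm ∈ comp S, F S mm ≤ e S := by
      intro S _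
      rw [hgErr S]
      refine mul_le_mul_of_nonneg_left ?_ hfrac
      simp only [hFdef]
      refine Finset.sum_le_sum_of_subset_of_nonneg (Finset.filter_subset _ _) ?_
      intro mm _ _
      exact Finset.sum_nonneg fun ww _ => hprpos mm ww S
    have hmid : (𝒰.card : ℝ) * (W n : ℝ)
        ≤ ∑ U ∈ 𝒰, ∑ jj ∈ U, F (U.erase jj) jj := by
      calc (𝒰.card : ℝ) * (W n : ℝ) = ∑ _U ∈ 𝒰, (W n : ℝ) := by
            rw [Finset.sum_const, nsmul_eq_mul]
        _ ≤ _ := by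
            refine Finset.sum_le_sum fun U hU => ?_
            have hswap : ∑ jj ∈ U, F (U.erase jj) jj
                = ∑ ww, ∑ jj ∈ U, pr jj ww (U.erase jj) := by
              simp only [hFdef]
              exact Finset.sum_comm
            rw [hswap]
            calc (W n : ℝ) = ∑ _ww : Fin (W n), (1 : ℝ) := by simp
              _ ≤ ∑ ww, ∑ jj ∈ U, pr jj ww (U.erase jj) :=
                  Finset.sum_le_sum fun ww _ => step3 U hU ww
    calc (𝒰.card : ℝ) / (M n : ℝ)
        = (1 / ((M n : ℝ) * (W n : ℝ))) * ((𝒰.card : ℝ) * (W n : ℝ)) := by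
          field_simp
      _ ≤ (1 / ((M n : ℝ) * (W n : ℝ)))
            * ∑ U ∈ 𝒰, ∑ jj ∈ U, F (U.erase jj) jj :=
          mul_le_mul_of_nonneg_left hmid hfrac
      _ = (1 / ((M n : ℝ) * (W n : ℝ)))
            * ∑ S ∈ 𝒮, ∑ mm ∈ comp S, F S mm := by rw [step2]
      _ = ∑ S ∈ 𝒮, (1 / ((M n : ℝ) * (W n : ℝ))) * ∑ mm ∈ comp S, F S mm :=
          Finset.mul_sum _ _ _
      _ ≤ ∑ S ∈ 𝒮, e S := Finset.sum_le_sum hstep1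
  -- bound on the number of jam vectors
  have h𝒮card : (𝒮.card : ℝ) ≤ (M n : ℝ) ^ L := by
    have hsub : 𝒮 ⊆ Finset.univ.powersetCard L := by
      intro S hS
      obtain ⟨p, hp, rfl⟩ := Finset.mem_image.mp hS
      obtain ⟨hpU, hpj⟩ := Finset.mem_sigma.mp hp
      refine Finset.mem_powersetCard.mpr ⟨Finset.subset_univ _, ?_⟩
      rw [Finset.card_erase_of_mem hpj, hUcard p.1 hpU]
      omega
    calc (𝒮.card : ℝ) ≤ ((Finset.univ.powersetCard L).card : ℝ) := by
          exact_mod_cast Finset.card_le_card hsub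
      _ = ((M n).choose L : ℝ) := by
          rw [Finset.card_powersetCard, Finset.card_univ, Fintype.card_fin]
      _ ≤ (M n : ℝ) ^ L := by exact_mod_cast Nat.choose_le_pow (M n) L
  -- extract a single good jam vector
  have h𝒮ne : 𝒮.Nonempty := by
    have h𝒰ne : 𝒰.Nonempty := by
      rw [← Finset.card_pos]
      by_contra h
      push_neg at h
      have h0 : (𝒰.card : ℝ) = 0 := by exact_mod_cast Nat.le_zero.mp h
      have hpos : (0 : ℝ) < c₀ * (M n : ℝ) ^ (L + 1) := by positivity
      linarith [h𝒰low]
    obtain ⟨U, hU⟩ := h𝒰ne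
    have hUne : U.Nonempty := Finset.card_pos.mp (by rw [hUcard U hU]; omega)
    obtain ⟨jj, hjj⟩ := hUne
    exact ⟨U.erase jj, Finset.mem_image.mpr ⟨⟨U, jj⟩, Finset.mem_sigma.mpr ⟨hU, hjj⟩, rfl⟩⟩
  have hsum_lb : ∑ _S ∈ 𝒮, c₀ ≤ ∑ S ∈ 𝒮, e S := by
    rw [Finset.sum_const, nsmul_eq_mul]
    calc (𝒮.card : ℝ) * c₀ ≤ (M n : ℝ) ^ L * c₀ :=
          mul_le_mul_of_nonneg_right h𝒮card hc₀.le
      _ = (c₀ * (M n : ℝ) ^ (L + 1)) / (M n : ℝ) := by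
          field_simp; ring
      _ ≤ (𝒰.card : ℝ) / (M n : ℝ) := by
          gcongr
      _ ≤ ∑ S ∈ 𝒮, e S := stepD
  obtain ⟨S, hS𝒮, hSe⟩ := Finset.exists_le_of_sum_le h𝒮ne hsum_lb
  obtain ⟨p, hp, hpe⟩ := Finset.mem_image.mp hS𝒮
  obtain ⟨hpU, hpj⟩ := Finset.mem_sigma.mp hp
  have hgoodprop := (mem_goodU_iff hpU).2
  refine ⟨sv S, ?_, hSe⟩
  have hprop := hgoodprop p.2 hpj
  rw [← hpe]
  exact hprop

end Stmt3
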